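/- Let G be a finite nilpotent group and A a nontrivial normal subgroup of G. Then M_G(A) = M(A)·[A,G], where M(A) is the intersection of the maximal normal subgroups of A and M_G(A) is the intersection of the maximal G-invariant proper subgroups of A. -/

import Mathlib

/-- `B` is a `G`-invariant subgroup of `A`: a subgroup of `A` normalized by all of `G`. -/
def IsGInv (G : Type*) [Group G] (A B : Subgroup G) : Prop :=
  B ≤ A ∧ ∀ g : G, ∀ b ∈ B, g * b * g⁻¹ ∈ B

/-- `B` is a maximal proper `G`-invariant subgroup of `A`. -/
def IsMaxGInv (G : Type*) [Group G] (A B : Subgroup G) : Prop :=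
  IsGInv G A B ∧ B < A ∧ ∀ C : Subgroup G, IsGInv G A C → C < A → B ≤ C → B = C

/-- `M_G(A)`: the intersection of all maximal proper `G`-invariant subgroups of `A`. -/
def MG (G : Type*) [Group G] (A : Subgroup G) : Subgroup G :=
  sInf {B | IsMaxGInv G A B}

/-- `B` is a maximal proper normal subgroup of `A` (as subgroups of `G`). -/
def IsMaxNormalIn (G : Type*) [Group G] (A B : Subgroup G) : Prop :=
  (B ≤ A ∧ ∀ a ∈ A, ∀ b ∈ B, a * b * a⁻¹ ∈ B) ∧ B < A ∧
    ∀ C : Subgroup G, (C ≤ A ∧ ∀ a ∈ A, ∀ c ∈ C, a * c * a⁻¹ ∈ C) → C < A → B ≤ C → B = C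

/-- `M(A)`: the Mel'nikov subgroup (cosocle) of `A`, the intersection of all maximal
proper normal subgroups of `A`. -/
def Mel (G : Type*) [Group G] (A : Subgroup G) : Subgroup G :=
  sInf {B | IsMaxNormalIn G A B}

section Helpers

variable {G : Type*} [Group G]

open scoped commutatorElement

/-- In a finite group, any member of a set of subgroups lies below a maximal member. -/
lemma exists_max_mem [Finite G] (s : Set (Subgroup G)) (C : Subgroup G) (hC : C ∈ s) :
    ∃ B ∈ s, C ≤ B ∧ ∀ D ∈ s, B ≤ D → B = D := by
  haveI : Finite (Subgroup G) :=
    Finite.of_injective (fun H => (H : Set G)) SetLike.coe_injective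
  obtain ⟨B, hB, hmax⟩ := Set.Finite.exists_maximalFor id {B ∈ s | C ≤ B}
    (Set.toFinite _) ⟨C, hC, le_rfl⟩
  exact ⟨B, hB.1, hB.2, fun D hD hBD => le_antisymm hBD (hmax ⟨hD, hB.2.trans hBD⟩ hBD)⟩

/-- A nontrivial normal subgroup of a nilpotent group contains a nontrivial central element. -/
lemma exists_center_inter (hnil : Group.IsNilpotent G) (N : Subgroup G) (hN : N.Normal)
    (h : N ≠ ⊥) : ∃ z : G, z ∈ N ∧ z ∈ Subgroup.center G ∧ z ≠ 1 := by
  obtain ⟨n, hn⟩ := nilpotent_iff_lowerCentralSeries.mp hnil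
  let f : ℕ → Subgroup G := fun k => Nat.rec N (fun _ M => ⁅M, ⊤⁆) k
  have hfs : ∀ k, f (k + 1) = ⁅f k, (⊤ : Subgroup G)⁆ := fun k => rfl
  have hnorm : ∀ k, (f k).Normal := by
    intro k
    induction k with
    | zero => exact hN
    | succ k ih => rw [hfs]; exact @Subgroup.commutator_normal _ _ _ _ ih inferInstance
  have hfN : ∀ k, f k ≤ N := by
    intro k
    induction k with
    | zero => exact le_rfl
    | succ k ih =>
      rw [hfs]
      exact le_trans (@Subgroup.commutator_le_left _ _ (f k) ⊤ (hnorm k)) ih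
  have hle : ∀ k, f k ≤ (⊤ : Subgroup G).lowerCentralSeries k := by
    intro k
    induction k with
    | zero => exact le_top
    | succ k ih =>
      rw [hfs, lowerCentralSeries_succ]
      exact Subgroup.commutator_mono ih le_rfl
  have hfn : f n = ⊥ := le_bot_iff.mp (hn ▸ hle n)
  clear hn
  suffices hclaim : ∀ k, f k = ⊥ → ∃ z : G, z ∈ N ∧ z ∈ Subgroup.center G ∧ z ≠ 1 from
    hclaim n hfn
  intro k
  induction k with
  | zero => exact fun hfn => absurd hfn h
  | succ n ih =>
    intro hfn
    rcases Classical.em (f n = ⊥) with hk | hk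
    · exact ih hk
    · obtain ⟨z, hz, hz1⟩ := SetLike.not_le_iff_exists.mp (fun hle => hk (le_bot_iff.mp hle))
      refine ⟨z, hfN n hz, Subgroup.mem_center_iff.mpr fun g => ?_, by
        simpa [Subgroup.mem_bot] using hz1⟩
      have hcomm : ⁅z, g⁆ ∈ f (n + 1) := by
        rw [hfs]
        exact Subgroup.commutator_mem_commutator hz (Subgroup.mem_top g)
      rw [hfn, Subgroup.mem_bot] at hcomm
      exact ((commutatorElement_eq_one_iff_commute.mp hcomm)).symm.eq

/-- Any subgroup between `⁅A, ⊤⁆` and `A` is normalized by every element of `G`. -/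
lemma ginv_of_comm_le {A B : Subgroup G} (hT : ⁅A, (⊤ : Subgroup G)⁆ ≤ B) (hBA : B ≤ A) :
    ∀ g : G, ∀ b ∈ B, g * b * g⁻¹ ∈ B := by
  intro g b hb
  have h1 : ⁅b⁻¹, g⁆ ∈ ⁅A, (⊤ : Subgroup G)⁆ :=
    Subgroup.commutator_mem_commutator (A.inv_mem (hBA hb)) (Subgroup.mem_top g)
  have h2 : g * b * g⁻¹ = b * ⁅b⁻¹, g⁆ := by group
  rw [h2]
  exact B.mul_mem hb (hT h1)

/-- A product of distinct primes is squarefree. -/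
lemma squarefree_prod_primes {s : Finset ℕ} (h : ∀ p ∈ s, p.Prime) :
    Squarefree (∏ p ∈ s, p) := by
  induction s using Finset.induction_on with
  | empty => simpa using squarefree_one
  | insert q s hnotmem ih =>
    rw [Finset.prod_insert hnotmem]
    have hq := h q (Finset.mem_insert_self q s)
    have hr : ∀ p ∈ s, p.Prime := fun p hp => h p (Finset.mem_insert_of_mem hp)
    refine (Nat.squarefree_mul ?_).mpr ⟨hq.prime.squarefree, ih hr⟩
    exact Nat.Coprime.prod_right fun p hp =>
      (Nat.coprime_primes hq (hr p hp)).mpr (fun hcon => hnotmem (hcon ▸ hp))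

/-- A maximal proper normal subgroup of a subgroup of a finite nilpotent group
has (some) prime exponent-quotient: all `p`-th powers fall into it. -/
lemma maxNormalIn_prime_pow [Finite G] (hnil : Group.IsNilpotent G) {A N : Subgroup G}
    (hmax : IsMaxNormalIn G A N) :
    ∃ p : ℕ, p.Prime ∧ p ∣ Nat.card G ∧ ∀ a ∈ A, a ^ p ∈ N := by
  haveI := hnil
  set S : Subgroup ↥A := N.subgroupOf A with hS
  haveI hSnormal : S.Normal := by
    constructor
    intro s hs a
    rw [Subgroup.mem_subgroupOf] at hs ⊢
    exact hmax.1.2 a a.2 s hs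
  set π := QuotientGroup.mk' S with hπ
  haveI : Nontrivial (↥A ⧸ S) := by
    obtain ⟨a, haA, haN⟩ := SetLike.exists_of_lt hmax.2.1
    refine ⟨π ⟨a, haA⟩, 1, fun hcon => haN ?_⟩
    have := (QuotientGroup.eq_one_iff (⟨a, haA⟩ : ↥A)).mp hcon
    rwa [Subgroup.mem_subgroupOf] at this
  obtain ⟨z, -, hzc, hz1⟩ := exists_center_inter (G := ↥A ⧸ S) inferInstance ⊤
    inferInstance (by
      intro hcon
      obtain ⟨u, v, huv⟩ := exists_pair_ne (↥A ⧸ S)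
      exact huv (by
        have hu : u ∈ (⊥ : Subgroup (↥A ⧸ S)) := hcon ▸ Subgroup.mem_top u
        have hv : v ∈ (⊥ : Subgroup (↥A ⧸ S)) := hcon ▸ Subgroup.mem_top v
        rw [Subgroup.mem_bot] at hu hv
        rw [hu, hv]))
  set n₀ := orderOf z with hn₀def
  have hn₀ : n₀ ≠ 1 := fun hcon => hz1 (orderOf_eq_one_iff.mp hcon)
  have n₀pos : 0 < n₀ := orderOf_pos z
  set p := n₀.minFac with hpdef
  have hp : p.Prime := Nat.minFac_prime hn₀
  have hpn : p ∣ n₀ := Nat.minFac_dvd n₀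
  set z' := z ^ (n₀ / p) with hz'def
  have hz'p : z' ^ p = 1 := by
    rw [hz'def, ← pow_mul, Nat.div_mul_cancel hpn, pow_orderOf_eq_one]
  have hz'1 : z' ≠ 1 := by
    intro hcon
    have hdvd : n₀ ∣ n₀ / p := orderOf_dvd_of_pow_eq_one hcon
    have hlt : n₀ / p < n₀ := Nat.div_lt_self n₀pos hp.one_lt
    have hpos : 0 < n₀ / p := Nat.div_pos (Nat.le_of_dvd n₀pos hpn) hp.pos
    exact absurd (Nat.le_of_dvd hpos hdvd) (not_le.mpr hlt)
  have hordz' : orderOf z' = p := by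
    rcases hp.eq_one_or_self_of_dvd _ (orderOf_dvd_of_pow_eq_one hz'p) with h1 | h1
    · exact absurd (orderOf_eq_one_iff.mp h1) hz'1
    · exact h1
  have hz'c : z' ∈ Subgroup.center (↥A ⧸ S) := Subgroup.pow_mem _ hzc _
  set C₀ := Subgroup.comap (π : ↥A →* ↥A ⧸ S) (Subgroup.zpowers z') with hC₀
  set C := C₀.map A.subtype with hC
  have hCle : C ≤ A := Subgroup.map_subtype_le C₀
  have hπb : ∀ b : ↥A, (b : G) ∈ N → π b = 1 := by
    intro b hb
    exact (QuotientGroup.eq_one_iff b).mpr (Subgroup.mem_subgroupOf.mpr hb)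
  have hNC : N ≤ C := by
    intro nn hn
    refine Subgroup.mem_map.mpr ⟨⟨nn, hmax.1.1 hn⟩, Subgroup.mem_comap.mpr ?_, rfl⟩
    rw [hπb _ hn]
    exact Subgroup.one_mem _
  haveI : (Subgroup.zpowers z').Normal := by
    constructor
    intro x hx g
    have hxc : x ∈ Subgroup.center (↥A ⧸ S) := Subgroup.zpowers_le.mpr hz'c hx
    have : g * x = x * g := (Subgroup.mem_center_iff.mp hxc g)
    rw [show g * x * g⁻¹ = x from by rw [this]; group]
    exact hx
  haveI hC₀n : C₀.Normal := Subgroup.Normal.comap inferInstance π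
  have hCnorm : ∀ a ∈ A, ∀ c ∈ C, a * c * a⁻¹ ∈ C := by
    intro a ha c hc
    obtain ⟨c₀, hc₀, rfl⟩ := Subgroup.mem_map.mp hc
    exact Subgroup.mem_map.mpr
      ⟨⟨a, ha⟩ * c₀ * ⟨a, ha⟩⁻¹, hC₀n.conj_mem c₀ hc₀ ⟨a, ha⟩, by simp⟩
  obtain ⟨a₁, ha₁⟩ := QuotientGroup.mk'_surjective S z'
  have ha₁C : (a₁ : G) ∈ C := by
    refine Subgroup.mem_map.mpr ⟨a₁, Subgroup.mem_comap.mpr ?_, rfl⟩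
    have hπa₁ : π a₁ = z' := ha₁
    rw [hπa₁]
    exact Subgroup.mem_zpowers z'
  have ha₁N : (a₁ : G) ∉ N := by
    intro hcon
    exact hz'1 (ha₁ ▸ hπb a₁ hcon)
  have hCA : C = A := by
    by_contra hne
    have := hmax.2.2 C ⟨hCle, hCnorm⟩ (lt_of_le_of_ne hCle hne) hNC
    exact ha₁N (this ▸ ha₁C)
  refine ⟨p, hp, ?_, ?_⟩
  · calc p = orderOf z' := hordz'.symm
      _ ∣ Nat.card (↥A ⧸ S) := orderOf_dvd_natCard z'
      _ ∣ Nat.card ↥A := Subgroup.card_quotient_dvd_card S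
      _ ∣ Nat.card G := Subgroup.card_subgroup_dvd_card A
  · intro a ha
    have haC : a ∈ C := hCA ▸ ha
    obtain ⟨c₀, hc₀, hcoe⟩ := Subgroup.mem_map.mp haC
    have hc₀eq : c₀ = ⟨a, ha⟩ := Subtype.ext hcoe
    rw [hc₀eq] at hc₀
    have hc₀' := Subgroup.mem_comap.mp hc₀
    obtain ⟨k, hk⟩ := Subgroup.mem_zpowers_iff.mp hc₀'
    have hpow : (π (⟨a, ha⟩ : ↥A)) ^ p = 1 := by
      rw [← hk, ← zpow_natCast, ← zpow_mul, mul_comm, zpow_mul, zpow_natCast, hz'p, one_zpow]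
    rw [← map_pow] at hpow
    have : (⟨a, ha⟩ : ↥A) ^ p ∈ S := (QuotientGroup.eq_one_iff _).mp hpow
    rw [Subgroup.mem_subgroupOf] at this
    simpa using this

end Helpers

/-- If `G` is a finite nilpotent group and `A` a nontrivial normal subgroup, then
`M_G(A) = M(A)·[A,G]`. -/
theorem MG_eq_Mel_sup_commutator_of_nilpotent (G : Type*) [Group G] [Finite G]
    (hnil : Group.IsNilpotent G) (A : Subgroup G) (hA : A.Normal) (hnt : A ≠ ⊥) :
    MG G A = Mel G A ⊔ ⁅A, (⊤ : Subgroup G)⁆ := by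
  haveI := hnil
  haveI := hA
  set T := ⁅A, (⊤ : Subgroup G)⁆ with hTdef
  have hTA : T ≤ A := Subgroup.commutator_le_left A ⊤
  haveI hTnormal : T.Normal := inferInstance
  -- `T < A`
  have hTlt : T < A := by
    refine lt_of_le_of_ne hTA fun hcon => ?_
    obtain ⟨n, hn⟩ := nilpotent_iff_lowerCentralSeries.mp hnil
    have : ∀ k, A ≤ (⊤ : Subgroup G).lowerCentralSeries k := by
      intro k
      induction k with
      | zero => exact le_top
      | succ k ih =>
        rw [lowerCentralSeries_succ]
        refine le_trans (le_of_eq hcon.symm) (le_trans (le_of_eq hTdef) ?_)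
        exact Subgroup.commutator_mono ih le_rfl
    exact hnt (le_bot_iff.mp (hn ▸ this n))
  -- upper bound direction: every maximal G-invariant subgroup contains `Mel ⊔ T`.
  have hupper : ∀ B : Subgroup G, IsMaxGInv G A B → Mel G A ⊔ T ≤ B := by
    intro B hB
    haveI hBnormal : B.Normal := ⟨fun b hb g => hB.1.2 g b hb⟩
    set π := QuotientGroup.mk' B with hπ
    have hπ1 : ∀ x : G, π x = 1 ↔ x ∈ B := fun x => QuotientGroup.eq_one_iff x
    haveI hXbn : (A.map (π : G →* G ⧸ B)).Normal := hA.map π (QuotientGroup.mk'_surjective B)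
    have hXbbot : A.map (π : G →* G ⧸ B) ≠ ⊥ := by
      obtain ⟨a, haA, haB⟩ := SetLike.exists_of_lt hB.2.1
      intro hcon
      have : π a ∈ A.map (π : G →* G ⧸ B) := Subgroup.mem_map.mpr ⟨a, haA, rfl⟩
      rw [hcon, Subgroup.mem_bot, hπ1] at this
      exact haB this
    obtain ⟨z, hzXb, hzc, hz1⟩ := exists_center_inter (G := G ⧸ B) inferInstance _ hXbn hXbbot
    obtain ⟨a₀, ha₀A, ha₀⟩ := Subgroup.mem_map.mp hzXb
    -- the preimage of `zpowers z` intersected with `A`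
    set C := Subgroup.comap (π : G →* G ⧸ B) (Subgroup.zpowers z) ⊓ A with hC
    have hCGinv : IsGInv G A C := by
      refine ⟨inf_le_right, fun g c hc => ?_⟩
      obtain ⟨hc1, hc2⟩ := Subgroup.mem_inf.mp hc
      refine Subgroup.mem_inf.mpr ⟨?_, hA.conj_mem c hc2 g⟩
      rw [Subgroup.mem_comap] at hc1 ⊢
      have hcc : π c ∈ Subgroup.center (G ⧸ B) := Subgroup.zpowers_le.mpr hzc hc1
      have : π (g * c * g⁻¹) = π c := by
        rw [map_mul, map_mul, map_inv]
        rw [show π g * π c = π c * π g from Subgroup.mem_center_iff.mp hcc (π g)]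
        group
      rw [this]
      exact hc1
    have hBC : B ≤ C := by
      intro b hb
      refine Subgroup.mem_inf.mpr ⟨?_, hB.1.1 hb⟩
      rw [Subgroup.mem_comap, (hπ1 b).mpr hb]
      exact Subgroup.one_mem _
    have ha₀C : a₀ ∈ C := by
      refine Subgroup.mem_inf.mpr ⟨?_, ha₀A⟩
      rw [Subgroup.mem_comap, ha₀]
      exact Subgroup.mem_zpowers z
    have ha₀B : a₀ ∉ B := fun hcon => hz1 (by rw [← ha₀, (hπ1 a₀).mpr hcon])
    have hCA : C = A := by
      by_contra hne
      have := hB.2.2 C hCGinv (lt_of_le_of_ne hCGinv.1 hne) hBC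
      exact ha₀B (this ▸ ha₀C)
    -- hence `A` maps into the center, so `⁅A, ⊤⁆ ≤ B`
    have hTB : T ≤ B := by
      rw [hTdef]
      rw [Subgroup.commutator_le]
      intro a haA g _
      have haC : a ∈ C := hCA ▸ haA
      have hac : π a ∈ Subgroup.center (G ⧸ B) :=
        Subgroup.zpowers_le.mpr hzc (Subgroup.mem_inf.mp haC).1
      rw [← hπ1, map_commutatorElement]
      exact commutatorElement_eq_one_iff_commute.mpr
        ((Subgroup.mem_center_iff.mp hac (π g)).symm)
    -- and `B` is a maximal normal subgroup of `A`, so `Mel ≤ B`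
    have hBmaxN : IsMaxNormalIn G A B := by
      refine ⟨⟨hB.1.1, fun a _ b hb => hB.1.2 a b hb⟩, hB.2.1, ?_⟩
      intro C' hC' hC'lt hBC'
      exact hB.2.2 C' ⟨hC'.1, ginv_of_comm_le (hTB.trans hBC') hC'.1⟩ hC'lt hBC'
    exact sup_le (sInf_le hBmaxN) hTB
  -- the exponent `m`
  set m := ∏ p ∈ (Nat.card G).primeFactors, p with hm
  have hmsq : Squarefree m := by
    rw [hm]
    exact squarefree_prod_primes (fun p hp => Nat.prime_of_mem_primeFactors hp)
  have hcardpos : Nat.card G ≠ 0 := Nat.card_pos.ne'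
  have hpowm : ∀ a ∈ A, a ^ m ∈ Mel G A := by
    intro a ha
    rw [Mel, Subgroup.mem_sInf]
    intro N hN
    obtain ⟨p, hp, hpdvd, hppow⟩ := maxNormalIn_prime_pow hnil hN
    have hpmem : p ∈ (Nat.card G).primeFactors :=
      Nat.mem_primeFactors.mpr ⟨hp, hpdvd, hcardpos⟩
    rw [hm, ← Finset.mul_prod_erase _ _ hpmem, pow_mul]
    exact N.pow_mem (hppow a ha) _
  -- `K := Mel ⊔ T < A`
  set K := Mel G A ⊔ T with hK
  obtain ⟨M, hMmem, hTM, hMmax⟩ := exists_max_mem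
    {B : Subgroup G | (B ≤ A ∧ ∀ a ∈ A, ∀ b ∈ B, a * b * a⁻¹ ∈ B) ∧ B < A} T
    ⟨⟨hTA, fun a _ b hb => hTnormal.conj_mem b hb a⟩, hTlt⟩
  have hMmaxN : IsMaxNormalIn G A M :=
    ⟨hMmem.1, hMmem.2, fun C hC hClt hMC => hMmax C ⟨hC, hClt⟩ hMC⟩
  have hKM : K ≤ M := sup_le (sInf_le hMmaxN) hTM
  have hKlt : K < A := lt_of_le_of_lt hKM hMmem.2
  have hKA : K ≤ A := hKlt.le
  have hTK : T ≤ K := le_sup_right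
  -- `MG ≤ A`
  obtain ⟨B₀, hB₀mem, -, hB₀max⟩ := exists_max_mem {B : Subgroup G | IsGInv G A B ∧ B < A} K
    ⟨⟨hKA, ginv_of_comm_le hTK hKA⟩, hKlt⟩
  have hB₀ : IsMaxGInv G A B₀ :=
    ⟨hB₀mem.1, hB₀mem.2, fun C hC hClt hBC => hB₀max C ⟨hC, hClt⟩ hBC⟩
  have hMGA : MG G A ≤ A := le_trans (sInf_le hB₀) hB₀mem.1.1
  -- lower bound direction: `MG ≤ K`
  have hlower : MG G A ≤ K := by
    intro x hx
    by_contra hxK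
    have hxA : x ∈ A := hMGA hx
    obtain ⟨B, hBmem, -, hBmax⟩ := exists_max_mem
      {B : Subgroup G | K ≤ B ∧ B ≤ A ∧ x ∉ B} K ⟨le_rfl, hKA, hxK⟩
    obtain ⟨hKB, hBA, hxB⟩ := hBmem
    have hkey : ∀ C : Subgroup G, K ≤ C → C ≤ A → B < C → x ∈ C := by
      intro C hKC hCA hBC
      by_contra hxC
      exact hBC.ne (hBmax C ⟨hKC, hCA, hxC⟩ hBC.le)
    have hBGinv : ∀ g : G, ∀ b ∈ B, g * b * g⁻¹ ∈ B := ginv_of_comm_le (hTK.trans hKB) hBA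
    haveI hBnormal : B.Normal := ⟨fun b hb g => hBGinv g b hb⟩
    set π := QuotientGroup.mk' B with hπ
    have hπ1 : ∀ y : G, π y = 1 ↔ y ∈ B := fun y => QuotientGroup.eq_one_iff y
    have hx1 : π x ≠ 1 := fun hcon => hxB ((hπ1 x).mp hcon)
    -- unique minimal property
    have hU : ∀ a ∈ A, π a ≠ 1 → π x ∈ Subgroup.zpowers (π a) := by
      intro a haA ha1
      set C := Subgroup.comap (π : G →* G ⧸ B) (Subgroup.zpowers (π a)) ⊓ A with hC
      have hBC : B ≤ C := by
        intro b hb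
        exact Subgroup.mem_inf.mpr
          ⟨by rw [Subgroup.mem_comap, (hπ1 b).mpr hb]; exact Subgroup.one_mem _, hBA hb⟩
      have haC : a ∈ C := Subgroup.mem_inf.mpr
        ⟨by rw [Subgroup.mem_comap]; exact Subgroup.mem_zpowers _, haA⟩
      have haB : a ∉ B := fun hcon => ha1 ((hπ1 a).mpr hcon)
      have hBltC : B < C := lt_of_le_of_ne hBC (fun hcon => haB (hcon ▸ haC))
      have := hkey C (hKB.trans hBC) inf_le_right hBltC
      exact Subgroup.mem_comap.mp (Subgroup.mem_inf.mp this).1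
    have hπm : ∀ a ∈ A, (π a) ^ m = 1 := by
      intro a haA
      rw [← map_pow, hπ1]
      have hMelK : Mel G A ≤ K := le_sup_left
      exact hKB (hMelK (hpowm a haA))
    -- order of `π x` is prime
    set p₀ := orderOf (π x) with hp₀def
    have hp₀1 : p₀ ≠ 1 := fun hcon => hx1 (orderOf_eq_one_iff.mp hcon)
    have hp₀pos : 0 < p₀ := orderOf_pos (π x)
    have hdvd_of : ∀ a ∈ A, π a ≠ 1 → p₀ ∣ orderOf (π a) := by
      intro a haA ha1
      exact orderOf_dvd_of_mem_zpowers (hU a haA ha1)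
    have hprime_of : ∀ a ∈ A, π a ≠ 1 → ∀ q : ℕ, q.Prime → q ∣ orderOf (π a) → q = p₀ := by
      intro a haA ha1 q hq hqdvd
      set n := orderOf (π a) with hn
      have hnpos : 0 < n := orderOf_pos _
      set b := a ^ (n / q) with hb
      have hbA : b ∈ A := A.pow_mem haA _
      have hπb : π b = (π a) ^ (n / q) := by rw [hb, map_pow]
      have hb1 : π b ≠ 1 := by
        rw [hπb]
        intro hcon
        have hdvd : n ∣ n / q := orderOf_dvd_of_pow_eq_one hcon
        have hlt : n / q < n := Nat.div_lt_self hnpos hq.one_lt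
        have hpos : 0 < n / q := Nat.div_pos (Nat.le_of_dvd hnpos hqdvd) hq.pos
        exact absurd (Nat.le_of_dvd hpos hdvd) (not_le.mpr hlt)
      have hordb : orderOf (π b) = q := by
        have hbq : (π b) ^ q = 1 := by
          rw [hπb, ← pow_mul, Nat.div_mul_cancel hqdvd, pow_orderOf_eq_one]
        rcases hq.eq_one_or_self_of_dvd _ (orderOf_dvd_of_pow_eq_one hbq) with h1 | h1
        · exact absurd (orderOf_eq_one_iff.mp h1) hb1
        · exact h1
      have := hdvd_of b hbA hb1
      rw [hordb] at this
      exact ((hq.eq_one_or_self_of_dvd _ this).resolve_left hp₀1).symm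
    have hp₀prime : p₀.Prime := by
      obtain ⟨q, hq, hqdvd⟩ := (Nat.exists_prime_and_dvd hp₀1)
      exact (hprime_of x hxA hx1 q hq hqdvd) ▸ hq
    -- every nontrivial image of `A` has order `p₀` and `π x` lies in its zpowers
    have hmem_zpx : ∀ a ∈ A, π a ∈ Subgroup.zpowers (π x) := by
      intro a haA
      by_cases ha1 : π a = 1
      · rw [ha1]; exact Subgroup.one_mem _
      · set n := orderOf (π a) with hn
        have hnpos : 0 < n := orderOf_pos _
        have hn1 : n ≠ 1 := fun hcon => ha1 (orderOf_eq_one_iff.mp hcon)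
        have hnsq : Squarefree n := hmsq.squarefree_of_dvd (orderOf_dvd_of_pow_eq_one (hπm a haA))
        have hnp : n = p₀ := by
          have hfac : n.primeFactors = {p₀} := by
            apply Finset.eq_singleton_iff_nonempty_unique_mem.mpr
            constructor
            · exact Nat.nonempty_primeFactors.mpr (lt_of_le_of_ne hnpos (Ne.symm hn1))
            · intro q hqmem
              exact hprime_of a haA ha1 q (Nat.prime_of_mem_primeFactors hqmem)
                (Nat.dvd_of_mem_primeFactors hqmem)
          have := Nat.prod_primeFactors_of_squarefree hnsq
          rw [hfac, Finset.prod_singleton] at this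
          exact this.symm
        have hle : Subgroup.zpowers (π x) ≤ Subgroup.zpowers (π a) :=
          Subgroup.zpowers_le.mpr (hU a haA ha1)
        have hcard : Nat.card (Subgroup.zpowers (π a)) ≤ Nat.card (Subgroup.zpowers (π x)) := by
          rw [Nat.card_zpowers, Nat.card_zpowers, ← hn, hnp]
        have heq := Subgroup.eq_of_le_of_card_ge hle hcard
        rw [heq]
        exact Subgroup.mem_zpowers _
    -- `B` is a maximal G-invariant subgroup
    have hBmaxG : IsMaxGInv G A B := by
      refine ⟨⟨hBA, hBGinv⟩, lt_of_le_of_ne hBA (fun hcon => hxB (hcon ▸ hxA)), ?_⟩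
      intro C hC hClt hBC
      by_contra hne
      have hBltC : B < C := lt_of_le_of_ne hBC hne
      have hxC : x ∈ C := hkey C (hKB.trans hBC) hC.1 hBltC
      have hAC : A ≤ C := by
        intro a haA
        obtain ⟨k, hk⟩ := Subgroup.mem_zpowers_iff.mp (hmem_zpx a haA)
        have hmem : a * (x ^ k)⁻¹ ∈ B := by
          rw [← hπ1 _]
          rw [map_mul, map_inv, map_zpow, hk]
          group
        have : a = (a * (x ^ k)⁻¹) * x ^ k := by group
        rw [this]
        exact C.mul_mem (hBC hmem) (C.zpow_mem hxC k)
      exact hClt.ne (le_antisymm hClt.le hAC)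
    exact hxB (Subgroup.mem_sInf.mp hx B hBmaxG)
  exact le_antisymm hlower (le_sInf fun B hB => hupper B hB)
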